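/- Let P be a left cancellative monoid acting on itself by left multiplication λ_p(q) = pq, viewed as partial bijections P → pP. For a right LCM monoid P, the map [p,q] ↦ λ_p ∘ λ_q^{-1} is an isomorphism from the inverse semigroup S of classes [p,q] together with 0 onto the left inverse hull I_l(P) (the inverse subsemigroup of the symmetric inverse monoid I(P) generated by the λ_p). -/
import Mathlib


/-- The principal right ideal `pP` of a monoid. -/
def rI {M : Type*} [Monoid M] (p : M) : Set M := {x | ∃ y, x = p * y}

/-- A right LCM monoid: left cancellative, and any two principal right ideals are
either disjoint or intersect in another principal right ideal. -/
class RightLCM (M : Type*) extends Monoid M where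
  mul_left_cancel' : ∀ a b c : M, a * b = a * c → b = c
  lcm : ∀ p q : M, rI p ∩ rI q = ∅ ∨ ∃ r : M, rI p ∩ rI q = rI r

namespace RightLCM

variable {M : Type*} [RightLCM M]

/-- The equivalence relation `(p,q) ∼ (pu,qu)` for units `u`. -/
def peq (x y : M × M) : Prop := ∃ u : M, IsUnit u ∧ x.1 = y.1 * u ∧ x.2 = y.2 * u

theorem peq_equivalence : Equivalence (peq (M := M)) := by
  constructor
  · intro x; exact ⟨1, isUnit_one, by simp, by simp⟩
  · rintro x y ⟨u, hu, h1, h2⟩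
    obtain ⟨w, hw⟩ := hu
    subst hw
    exact ⟨↑w⁻¹, Units.isUnit _, by rw [h1, mul_assoc, w.mul_inv, mul_one],
      by rw [h2, mul_assoc, w.mul_inv, mul_one]⟩
  · rintro x y z ⟨u, hu, h1, h2⟩ ⟨v, hv, h3, h4⟩
    exact ⟨v * u, hv.mul hu, by rw [h1, h3, mul_assoc], by rw [h2, h4, mul_assoc]⟩

instance pSetoid : Setoid (M × M) := ⟨peq, peq_equivalence⟩

/-- The inverse semigroup `S = {[p,q] : p,q ∈ P} ∪ {0}` associated to a right LCM monoid. -/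
abbrev S (M : Type*) [RightLCM M] := WithZero (Quotient (pSetoid (M := M)))

/-- The class `[p,q]` as an element of `S M`. -/
def cls (p q : M) : S M := (Quotient.mk (pSetoid (M := M)) (p, q) : Quotient (pSetoid (M := M)))

open scoped Classical in
/-- Product of two representatives: `[a,b][c,d] = [ab', dc']` when `bP ∩ cP = rP` with
`bb' = cc' = r`, and `0` when `bP ∩ cP = ∅`. -/
noncomputable def mulPair (x y : M × M) : S M :=
  if h : rI x.2 ∩ rI y.1 = ∅ then 0
  else
    have hr := (RightLCM.lcm x.2 y.1).resolve_left h
    have hmem : Classical.choose hr ∈ rI x.2 ∩ rI y.1 :=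
      (Set.ext_iff.mp (Classical.choose_spec hr) _).mpr ⟨1, (mul_one _).symm⟩
    cls (x.1 * Classical.choose hmem.1) (y.2 * Classical.choose hmem.2)

/-- The multiplication on `S M` (with `0` absorbing). -/
noncomputable def smul : S M → S M → S M
  | none, _ => 0
  | some _, none => 0
  | some a, some b => mulPair a.out b.out

/-- The involution `[p,q]* = [q,p]` on `S M`. -/
noncomputable def star : S M → S M
  | none => 0
  | some a => cls a.out.2 a.out.1

end RightLCM

namespace RightLCM

variable {M : Type*} [RightLCM M]

open scoped Classical in
/-- The partial bijection `λ_p : P → pP`, `λ_p(q) = pq`, as an element of the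
symmetric inverse monoid of partial bijections of `P`. -/
noncomputable def lamP (p : M) : PartialEquiv M M where
  toFun := fun x => p * x
  invFun := fun x => if h : ∃ y, x = p * y then Classical.choose h else x
  source := Set.univ
  target := rI p
  map_source' := fun x _ => ⟨x, rfl⟩
  map_target' := fun x _ => Set.mem_univ _
  left_inv' := fun x _ => by
    have h : ∃ y, p * x = p * y := ⟨x, rfl⟩
    show (if h : ∃ y, p * x = p * y then Classical.choose h else p * x) = x
    rw [dif_pos h]
    exact RightLCM.mul_left_cancel' p _ x (Classical.choose_spec h).symm
  right_inv' := fun x hx => by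
    have h : ∃ y, x = p * y := hx
    show p * (if h : ∃ y, x = p * y then Classical.choose h else x) = x
    rw [dif_pos h]
    exact (Classical.choose_spec h).symm

/-- The left inverse hull `I_l(P)`: the inverse subsemigroup of the symmetric inverse
monoid generated by the `λ_p`. -/
inductive InvHull : PartialEquiv M M → Prop
  | lam (p : M) : InvHull (lamP p)
  | symm {e : PartialEquiv M M} : InvHull e → InvHull e.symm
  | trans {e f : PartialEquiv M M} : InvHull e → InvHull f → InvHull (e.trans f)

/-- The empty partial bijection. -/
def emptyPE : PartialEquiv M M where
  toFun := id
  invFun := id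
  source := ∅
  target := ∅
  map_source' := fun _ h => h.elim
  map_target' := fun _ h => h.elim
  left_inv' := fun _ h => h.elim
  right_inv' := fun _ h => h.elim

/-- The map `[p,q] ↦ λ_p ∘ λ_q⁻¹` (and `0 ↦` the empty map). -/
noncomputable def phi : S M → PartialEquiv M M
  | none => emptyPE
  | some a => (lamP a.out.2).symm.trans (lamP a.out.1)

lemma cancel {a b c : M} (h : a * b = a * c) : b = c := mul_left_cancel' a b c h

lemma mem_rI_self (p : M) : p ∈ rI p := ⟨1, (mul_one p).symm⟩

lemma rI_mul_unit (q : M) {u : M} (hu : IsUnit u) : rI (q * u) = rI q := by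
  obtain ⟨w, rfl⟩ := hu
  ext x
  constructor
  · rintro ⟨y, rfl⟩; exact ⟨(w : M) * y, by rw [mul_assoc]⟩
  · rintro ⟨y, rfl⟩
    exact ⟨(↑w⁻¹ : M) * y, by rw [mul_assoc, ← mul_assoc (w : M), w.mul_inv, one_mul]⟩

lemma lamP_source (p : M) : (lamP p).source = Set.univ := rfl
lemma lamP_target (p : M) : (lamP p).target = rI p := rfl
lemma lamP_apply (p x : M) : lamP p x = p * x := rfl

lemma lamP_symm_apply (q y : M) : (lamP q).symm (q * y) = y := by
  have h : (lamP q) y = q * y := rfl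
  rw [← h]
  exact (lamP q).left_inv (by exact Set.mem_univ y)

/-- The partial bijection `λ_p λ_q⁻¹`. -/
noncomputable def T (p q : M) : PartialEquiv M M := (lamP q).symm.trans (lamP p)

lemma T_source (p q : M) : (T p q).source = rI q := by
  rw [T, PartialEquiv.trans_source, PartialEquiv.symm_source, lamP_target, lamP_source,
    Set.preimage_univ, Set.inter_univ]

lemma T_apply (p q y : M) : T p q (q * y) = p * y := by
  rw [T, PartialEquiv.coe_trans, Function.comp_apply, lamP_symm_apply, lamP_apply]

lemma T_equiv {e : PartialEquiv M M} {p q : M} (hs : e.source = rI q)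
    (hmap : ∀ y, e (q * y) = p * y) : T p q ≈ e := by
  constructor
  · rw [T_source, hs]
  · intro x hx
    rw [T_source] at hx
    obtain ⟨y, rfl⟩ := hx
    rw [T_apply, hmap]

lemma peq_T {x y : M × M} (h : peq x y) : T x.1 x.2 ≈ T y.1 y.2 := by
  obtain ⟨u, hu, h1, h2⟩ := h
  refine T_equiv ?_ ?_
  · rw [T_source, h2, rI_mul_unit _ hu]
  · intro z
    have hz : x.2 * z = y.2 * (u * z) := by rw [h2, mul_assoc]
    rw [hz, T_apply, h1, mul_assoc]

lemma phi_some (a : Quotient (pSetoid (M := M))) :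
    phi (some a) = T a.out.1 a.out.2 := rfl

lemma phi_cls (p q : M) : phi (cls p q) ≈ T p q :=
  peq_T (Quotient.mk_out (s := pSetoid (M := M)) (p, q))

lemma empty_equiv {e : PartialEquiv M M} (h : e.source = ∅) :
    emptyPE (M := M) ≈ e := by
  constructor
  · exact h.symm
  · intro x hx
    exact hx.elim

lemma mulPair_spec (x y : M × M) (h : ¬ rI x.2 ∩ rI y.1 = ∅) :
    ∃ b' c', rI x.2 ∩ rI y.1 = rI (x.2 * b') ∧ x.2 * b' = y.1 * c' ∧
      mulPair x y = cls (x.1 * b') (y.2 * c') := by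
  have hr := (RightLCM.lcm x.2 y.1).resolve_left h
  have hmem : Classical.choose hr ∈ rI x.2 ∩ rI y.1 :=
    (Set.ext_iff.mp (Classical.choose_spec hr) _).mpr ⟨1, (mul_one _).symm⟩
  refine ⟨Classical.choose hmem.1, Classical.choose hmem.2, ?_, ?_, ?_⟩
  · rw [← Classical.choose_spec hmem.1]; exact Classical.choose_spec hr
  · rw [← Classical.choose_spec hmem.1, ← Classical.choose_spec hmem.2]
  · simp only [mulPair, dif_neg h]

lemma key (x y : M × M) : phi (mulPair x y) ≈ (T y.1 y.2).trans (T x.1 x.2) := by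
  obtain ⟨p₁, q₁⟩ := x
  obtain ⟨p₂, q₂⟩ := y
  by_cases h : rI q₁ ∩ rI p₂ = ∅
  · have h0 : mulPair (p₁, q₁) (p₂, q₂) = 0 := dif_pos h
    rw [h0]
    refine empty_equiv ?_
    rw [PartialEquiv.trans_source, T_source]
    ext z
    simp only [Set.mem_inter_iff, Set.mem_preimage, Set.mem_empty_iff_false, iff_false]
    rintro ⟨⟨w, rfl⟩, hw⟩
    rw [T_apply, T_source] at hw
    have hmem : p₂ * w ∈ rI q₁ ∩ rI p₂ := ⟨hw, ⟨w, rfl⟩⟩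
    rw [h] at hmem
    exact hmem
  · obtain ⟨b', c', hI, hbc, hmul⟩ := mulPair_spec (p₁, q₁) (p₂, q₂) h
    rw [hmul]
    refine Setoid.trans (phi_cls _ _) (T_equiv ?_ ?_)
    · rw [PartialEquiv.trans_source, T_source]
      ext z
      constructor
      · rintro ⟨⟨w, rfl⟩, hw⟩
        rw [Set.mem_preimage, T_apply, T_source] at hw
        have hm : p₂ * w ∈ rI (q₁ * b') :=
          (Set.ext_iff.mp hI _).mp ⟨hw, ⟨w, rfl⟩⟩
        obtain ⟨v, hv⟩ := hm
        rw [hbc, mul_assoc] at hv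
        exact ⟨v, by rw [cancel hv, mul_assoc]⟩
      · rintro ⟨v, rfl⟩
        refine ⟨⟨c' * v, by rw [mul_assoc]⟩, ?_⟩
        rw [Set.mem_preimage, mul_assoc, T_apply, T_source]
        exact ⟨b' * v, by rw [← mul_assoc, ← hbc, mul_assoc]⟩
    · intro v
      rw [mul_assoc, PartialEquiv.trans_apply, T_apply]
      have h2 : p₂ * (c' * v) = q₁ * (b' * v) := by
        rw [← mul_assoc, ← hbc, mul_assoc]
      rw [h2, T_apply, ← mul_assoc]

lemma phi_mul (x y : S M) : phi (smul x y) ≈ (phi y).trans (phi x) := by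
  match x, y with
  | none, y =>
    refine empty_equiv ?_
    rw [PartialEquiv.trans_source]
    have h0 : (phi (M := M) none).source = ∅ := rfl
    rw [h0, Set.preimage_empty, Set.inter_empty]
  | some a, none =>
    refine empty_equiv ?_
    rw [PartialEquiv.trans_source]
    have h0 : (phi (M := M) none).source = ∅ := rfl
    rw [h0, Set.empty_inter]
  | some a, some b =>
    exact key a.out b.out

end RightLCM

open RightLCM in
/-- The map `[p,q] ↦ λ_p λ_q⁻¹` is an isomorphism of the inverse semigroup `S`
onto the left inverse hull of `P` (up to equality of partial maps on their sources):
it is injective, multiplicative (composition being on the largest possible domain),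
its nonzero values lie in the left inverse hull, and every element of the left
inverse hull arises this way. -/
theorem stmt15 {M : Type*} [RightLCM M] :
    (∀ s t : S M, phi s ≈ phi t → s = t) ∧
    (∀ x y : S M, phi (smul x y) ≈ (phi y).trans (phi x)) ∧
    (∀ s : S M, s ≠ 0 → ∃ e : PartialEquiv M M, InvHull e ∧ phi s ≈ e) ∧
    (∀ e : PartialEquiv M M, InvHull e → ∃ s : S M, phi s ≈ e) := by
  refine ⟨?_, phi_mul, ?_, ?_⟩
  · intro s t h
    match s, t with
    | none, none => rfl
    | none, some b =>
      exfalso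
      have h0 : (phi (M := M) none).source = ∅ := rfl
      have h1 : (phi (M := M) none).source = (phi (some b)).source := h.1
      rw [phi_some, T_source, h0] at h1
      have h2 : b.out.2 ∈ (∅ : Set M) := h1 ▸ mem_rI_self b.out.2
      exact h2
    | some a, none =>
      exfalso
      have h0 : (phi (M := M) none).source = ∅ := rfl
      have h1 : (phi (some a)).source = (phi (M := M) none).source := h.1
      rw [phi_some, T_source, h0] at h1
      have h2 : a.out.2 ∈ (∅ : Set M) := h1 ▸ mem_rI_self a.out.2
      exact h2
    | some a, some b =>
      have hsrc : rI a.out.2 = rI b.out.2 := by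
        have h1 := h.1
        rwa [phi_some, phi_some, T_source, T_source] at h1
      obtain ⟨u, hqu⟩ : a.out.2 ∈ rI b.out.2 :=
        (Set.ext_iff.mp hsrc _).mp (mem_rI_self _)
      obtain ⟨v, hq'v⟩ : b.out.2 ∈ rI a.out.2 :=
        (Set.ext_iff.mp hsrc _).mpr (mem_rI_self _)
      have h1 : b.out.2 * (u * v) = b.out.2 * 1 := by
        rw [← mul_assoc, ← hqu, ← hq'v, mul_one]
      have h2 : a.out.2 * (v * u) = a.out.2 * 1 := by
        rw [← mul_assoc, ← hq'v, ← hqu, mul_one]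
      have hu : IsUnit u := ⟨⟨u, v, cancel h1, cancel h2⟩, rfl⟩
      have hmem : a.out.2 ∈ (phi (some a)).source := by
        rw [phi_some, T_source]; exact mem_rI_self _
      have hpq := h.2 hmem
      rw [phi_some, phi_some] at hpq
      have hL : (T a.out.1 a.out.2) a.out.2 = a.out.1 := by
        have h3 := T_apply a.out.1 a.out.2 1
        rwa [mul_one, mul_one] at h3
      have hR : (T b.out.1 b.out.2) a.out.2 = b.out.1 * u := by
        have h3 := T_apply b.out.1 b.out.2 u
        rwa [← hqu] at h3
      rw [hL, hR] at hpq
      have hab : a = b := by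
        rw [← Quotient.out_eq a, ← Quotient.out_eq b]
        exact Quotient.sound ⟨u, hu, hpq, hqu⟩
      rw [hab]
  · intro s hs
    match s with
    | none => exact absurd rfl hs
    | some a =>
      exact ⟨(lamP a.out.2).symm.trans (lamP a.out.1),
        InvHull.trans (InvHull.symm (InvHull.lam a.out.2)) (InvHull.lam a.out.1),
        Setoid.refl _⟩
  · intro e he
    induction he with
    | lam p =>
      refine ⟨cls p 1, Setoid.trans (phi_cls p 1) ⟨?_, ?_⟩⟩
      · have h1 : rI (1 : M) = Set.univ :=
          Set.eq_univ_of_forall fun x => ⟨x, (one_mul x).symm⟩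
        rw [T_source, h1, lamP_source]
      · intro x _
        have h := T_apply p 1 x
        rw [one_mul] at h
        exact h
    | symm h ih =>
      obtain ⟨s, hs⟩ := ih
      match s, hs with
      | none, hs =>
        exact ⟨none, PartialEquiv.EqOnSource.symm' hs⟩
      | some a, hs =>
        refine ⟨cls a.out.2 a.out.1, Setoid.trans (phi_cls _ _) ?_⟩
        have h2 : (T a.out.1 a.out.2).symm = T a.out.2 a.out.1 := by
          rw [T, T, PartialEquiv.trans_symm_eq_symm_trans_symm, PartialEquiv.symm_symm]
        rw [← h2]
        exact PartialEquiv.EqOnSource.symm' hs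
    | trans h1 h2 ih1 ih2 =>
      obtain ⟨s, hs⟩ := ih1
      obtain ⟨t, ht⟩ := ih2
      exact ⟨smul t s, Setoid.trans (phi_mul t s) (PartialEquiv.EqOnSource.trans' hs ht)⟩
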